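/- For every integer n ≥ 2, the language L_n = {a^{n−2}} over the one-letter alphabet {a} satisfies sc(L_n) = n and sc(root(L_n)) = n; hence the bound sc(root(L)) ≤ sc(L) for unary regular languages is tight. -/
import Mathlib

/-- `root L` = words some positive power of which lies in `L`. -/
def root {A : Type} (L : Language A) : Language A :=
  {w | ∃ m : ℕ, 1 ≤ m ∧ (List.replicate m w).flatten ∈ L}

/-- A language is regular if some DFA with finitely many states recognizes it. -/
def IsReg {A : Type} (L : Language A) : Prop :=
  ∃ (σ : Type) (_ : Fintype σ) (M : DFA A σ), M.accepts = L

/-- The state complexity of a language: the least number of states of a DFA recognizing it. -/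
noncomputable def sc {A : Type} (L : Language A) : ℕ :=
  sInf {m | ∃ (σ : Type) (_ : Fintype σ) (M : DFA A σ), M.accepts = L ∧ Fintype.card σ = m}

lemma sc_unary {A : Type} (a : A) (ha : ∀ x : A, x = a) (k : ℕ) (L : Language A)
    (S : Set ℕ) (hk : k ∈ S) (hS : ∀ j ∈ S, j ≤ k)
    (hmem : ∀ j : ℕ, List.replicate j a ∈ L ↔ j ∈ S) :
    sc L = k + 2 := by
  have hword : ∀ w : List A, w = List.replicate w.length a := by
    intro w
    apply List.eq_replicate_of_mem
    intro b _; exact ha b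
  -- the canonical DFA
  set M : DFA A (Fin (k + 2)) :=
    { step := fun s _ => ⟨min (s.val + 1) (k + 1), by omega⟩
      start := ⟨0, by omega⟩
      accept := {s | s.val ∈ S} } with hM
  have heval : ∀ j : ℕ, M.eval (List.replicate j a) = ⟨min j (k + 1), by omega⟩ := by
    intro j
    induction j with
    | zero => simp [DFA.eval, DFA.evalFrom, hM]
    | succ j ih =>
        rw [List.replicate_succ', DFA.eval, DFA.evalFrom_append_singleton]
        rw [DFA.eval] at ih
        rw [ih]
        simp only [hM]
        congr 1
        omega
  have hacc : M.accepts = L := by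
    ext w
    rw [hword w, DFA.mem_accepts, heval, hmem]
    simp only [hM, Set.mem_setOf_eq]
    constructor
    · intro h
      rcases le_or_gt w.length (k + 1) with h' | h'
      · simpa [Nat.min_eq_left h'] using h
      · exfalso
        rw [Nat.min_eq_right (by omega)] at h
        exact absurd (hS _ h) (by omega)
    · intro h
      have := hS _ h
      rwa [Nat.min_eq_left (by omega)]
  unfold sc
  apply le_antisymm
  · exact Nat.sInf_le (s := {m | ∃ (σ : Type) (_ : Fintype σ) (M' : DFA A σ), M'.accepts = L ∧ Fintype.card σ = m}) ⟨Fin (k + 2), inferInstance, M, hacc, by simp⟩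
  · apply le_csInf
    · exact ⟨k + 2, Fin (k + 2), inferInstance, M, hacc, by simp⟩
    rintro m ⟨σ, hfin, N, hN, rfl⟩
    have key : ∀ i j : Fin (k + 2), i < j →
        N.eval (List.replicate i.val a) = N.eval (List.replicate j.val a) → False := by
      intro i j hlt hij
      have h1 : List.replicate (i.val) a ++ List.replicate (k - i.val) a
          = List.replicate k a := by
        rw [← List.replicate_add]; congr 1; omega
      have h2 : List.replicate (j.val) a ++ List.replicate (k - i.val) a
          = List.replicate (j.val + (k - i.val)) a := by
        rw [← List.replicate_add]
      have hin : List.replicate k a ∈ N.accepts := by rw [hN, hmem]; exact hk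
      have hout : List.replicate (j.val + (k - i.val)) a ∉ N.accepts := by
        rw [hN, hmem]
        intro h
        have hjk := j.isLt
        have := hS _ h
        omega
      rw [DFA.mem_accepts, ← h1, DFA.eval, DFA.evalFrom_of_append] at hin
      rw [DFA.mem_accepts, ← h2, DFA.eval, DFA.evalFrom_of_append] at hout
      rw [← DFA.eval] at hin hout
      rw [hij] at hin
      exact hout hin
    have hinj : Function.Injective (fun i : Fin (k + 2) => N.eval (List.replicate i.val a)) := by
      intro i j hij
      simp only at hij
      by_contra hne
      rcases lt_or_gt_of_ne hne with h | h
      · exact key i j h hij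
      · exact key j i h hij.symm
    calc k + 2 = Fintype.card (Fin (k + 2)) := by simp
    _ ≤ Fintype.card σ := Fintype.card_le_of_injective _ hinj

theorem proposition_2_1_tight {A : Type} [Fintype A] (hA : Fintype.card A = 1) (a : A)
    (n : ℕ) (hn : 2 ≤ n) (L : Language A) (hL : L = {List.replicate (n - 2) a}) :
    sc L = n ∧ sc (root L) = n := by
  obtain ⟨c, hc⟩ := Fintype.card_eq_one_iff.mp hA
  have ha : ∀ x : A, x = a := fun x => (hc x).trans (hc a).symm
  set k := n - 2 with hk
  have hn2 : k + 2 = n := by omega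
  have hLmem : ∀ j : ℕ, List.replicate j a ∈ L ↔ j = k := by
    intro j
    rw [hL]
    constructor
    · intro h
      have h' : List.replicate j a = List.replicate k a := h
      have := congrArg List.length h'
      simpa using this
    · rintro rfl; rfl
  constructor
  · rw [← hn2]
    exact sc_unary a ha k L {k} rfl (by rintro j rfl; exact le_rfl) (by simpa using hLmem)
  · rw [← hn2]
    apply sc_unary a ha k (root L) {j | ∃ m : ℕ, 1 ≤ m ∧ j * m = k}
    · exact ⟨1, le_rfl, by omega⟩
    · rintro j ⟨m, hm1, hmk⟩
      nlinarith
    · intro j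
      constructor
      · rintro ⟨m, hm1, hm⟩
        rw [List.flatten_replicate_replicate, hLmem] at hm
        exact ⟨m, hm1, (Nat.mul_comm j m).trans hm⟩
      · rintro ⟨m, hm1, hm⟩
        exact ⟨m, hm1, by
          rw [List.flatten_replicate_replicate, hLmem]
          exact (Nat.mul_comm m j).trans hm⟩
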